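/- Assume the antipode of A is bijective. Then τ ∘ (𝒮⊗𝒮) ∘ Δ = Δ ∘ 𝒮 as maps H1 → H1⊗H1 (where τ is the flip map on H1⊗H1) if and only if both of the following hold: a_(1) ⊗ d(a_(2)) = a_(2) ⊗ d(a_(1)) in A⊗H for all a ∈ A, and H is cocommutative (τ ∘ Δ_H = Δ_H). (Proposition 2.7(iii).) -/

import Mathlib

open TensorProduct

noncomputable section

variable (k A H : Type*) [Field k] [Ring A] [Ring H]
  [HopfAlgebra k A] [HopfAlgebra k H]

/-- `t(a⊗h) = d(a)h`. -/
def tmap (d : A →ₗ[k] H) : A ⊗[k] H →ₗ[k] H :=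
  LinearMap.mul' k H ∘ₗ map d LinearMap.id

/-- `s(a⊗h) = ε(a)h`. -/
def smap : A ⊗[k] H →ₗ[k] H :=
  (TensorProduct.lid k H).toLinearMap ∘ₗ map (Coalgebra.counit : A →ₗ[k] k) LinearMap.id

/-- `i(h) = 1⊗h`. -/
def imap : H →ₗ[k] A ⊗[k] H := TensorProduct.mk k A H 1

/-- The tensor-product coproduct `Δ(a⊗h) = (a₁⊗h₁) ⊗ (a₂⊗h₂)` on `H1 = A ⊗ H`. -/
def comul1 : A ⊗[k] H →ₗ[k] (A ⊗[k] H) ⊗[k] (A ⊗[k] H) :=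
  (tensorTensorTensorComm k A A H H).toLinearMap ∘ₗ
    map (Coalgebra.comul : A →ₗ[k] A ⊗[k] A) (Coalgebra.comul : H →ₗ[k] H ⊗[k] H)

/-- The tensor-product counit `ε(a⊗h) = ε(a)ε(h)` on `H1 = A ⊗ H`. -/
def counit1 : A ⊗[k] H →ₗ[k] k :=
  (TensorProduct.lid k k).toLinearMap ∘ₗ
    map (Coalgebra.counit : A →ₗ[k] k) (Coalgebra.counit : H →ₗ[k] k)

/-- The left coaction `DL = (t⊗id)Δ`. -/
def DLmap (d : A →ₗ[k] H) : A ⊗[k] H →ₗ[k] H ⊗[k] (A ⊗[k] H) :=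
  map (tmap k A H d) LinearMap.id ∘ₗ comul1 k A H

/-- The right coaction `DR = (id⊗s)Δ`. -/
def DRmap : A ⊗[k] H →ₗ[k] (A ⊗[k] H) ⊗[k] H :=
  map LinearMap.id (smap k A H) ∘ₗ comul1 k A H

/-- The second product `(a⊗h)∘(b⊗g) = ε(h) ab ⊗ g`. -/
def circ : (A ⊗[k] H) ⊗[k] (A ⊗[k] H) →ₗ[k] A ⊗[k] H :=
  map (LinearMap.mul' k A)
      ((TensorProduct.lid k H).toLinearMap ∘ₗ map (Coalgebra.counit : H →ₗ[k] k) LinearMap.id)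
    ∘ₗ (tensorTensorTensorComm k A H A H).toLinearMap

/-- The quantum groupoid antipode `𝒮(a⊗h) = S(a₁) ⊗ d(a₂)h`. -/
def SS (d : A →ₗ[k] H) : A ⊗[k] H →ₗ[k] A ⊗[k] H :=
  map (HopfAlgebra.antipode (R := k) : A →ₗ[k] A) (tmap k A H d)
    ∘ₗ (TensorProduct.assoc k A A H).toLinearMap
    ∘ₗ map (Coalgebra.comul : A →ₗ[k] A ⊗[k] A) LinearMap.id

/-- The smash product multiplication `(a⊗h)(b⊗g) = a(h₁▷b) ⊗ h₂g`. -/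
def smashMul (act : H ⊗[k] A →ₗ[k] A) :
    (A ⊗[k] H) ⊗[k] (A ⊗[k] H) →ₗ[k] A ⊗[k] H :=
  map (LinearMap.mul' k A) LinearMap.id
  ∘ₗ (TensorProduct.assoc k A A H).symm.toLinearMap
  ∘ₗ map LinearMap.id
      (map act (LinearMap.mul' k H)
        ∘ₗ (tensorTensorTensorComm k H H A H).toLinearMap)
  ∘ₗ (TensorProduct.assoc k A (H ⊗[k] H) (A ⊗[k] H)).toLinearMap
  ∘ₗ map (map LinearMap.id (Coalgebra.comul : H →ₗ[k] H ⊗[k] H)) LinearMap.id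

/-- The cotensor product `H1□H1`. -/
def cot (d : A →ₗ[k] H) : Set ((A ⊗[k] H) ⊗[k] (A ⊗[k] H)) :=
  {x | (TensorProduct.assoc k (A ⊗[k] H) H (A ⊗[k] H)).toLinearMap
        (map (DRmap k A H) LinearMap.id x) = map LinearMap.id (DLmap k A H d) x}

/-- A Hopf (algebra) crossed module. -/
structure HopfCrossedModule (act : H ⊗[k] A →ₗ[k] A) (d : A →ₗ[k] H) : Prop where
  /-- `(hg)▷a = h▷(g▷a)` -/
  act_mul : ∀ (h g : H) (a : A), act ((h * g) ⊗ₜ[k] a) = act (h ⊗ₜ[k] act (g ⊗ₜ[k] a))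
  /-- `1▷a = a` -/
  act_one : ∀ a : A, act ((1 : H) ⊗ₜ[k] a) = a
  /-- `h▷(ab) = (h₁▷a)(h₂▷b)` -/
  act_mul_alg : act ∘ₗ map LinearMap.id (LinearMap.mul' k A)
      = LinearMap.mul' k A ∘ₗ map act act
          ∘ₗ (tensorTensorTensorComm k H H A A).toLinearMap
          ∘ₗ map (Coalgebra.comul : H →ₗ[k] H ⊗[k] H) LinearMap.id
  /-- `h▷1 = ε(h)1` -/
  act_unit : ∀ h : H, act (h ⊗ₜ[k] (1 : A)) = (Coalgebra.counit h : k) • (1 : A)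
  /-- `Δ(h▷a) = (h₁▷a₁)⊗(h₂▷a₂)` -/
  act_comul : (Coalgebra.comul : A →ₗ[k] A ⊗[k] A) ∘ₗ act
      = map act act ∘ₗ (tensorTensorTensorComm k H H A A).toLinearMap
          ∘ₗ map (Coalgebra.comul : H →ₗ[k] H ⊗[k] H) (Coalgebra.comul : A →ₗ[k] A ⊗[k] A)
  /-- `ε(h▷a) = ε(h)ε(a)` -/
  act_counit : ∀ (h : H) (a : A),
      (Coalgebra.counit (act (h ⊗ₜ[k] a)) : k) = Coalgebra.counit h * Coalgebra.counit a
  /-- `h₁ ⊗ (h₂▷a) = h₂ ⊗ (h₁▷a)` -/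
  act_cocomm : map LinearMap.id act ∘ₗ (TensorProduct.assoc k H H A).toLinearMap
        ∘ₗ map (Coalgebra.comul : H →ₗ[k] H ⊗[k] H) LinearMap.id
      = map LinearMap.id act ∘ₗ (TensorProduct.assoc k H H A).toLinearMap
        ∘ₗ map ((TensorProduct.comm k H H).toLinearMap
              ∘ₗ (Coalgebra.comul : H →ₗ[k] H ⊗[k] H)) LinearMap.id
  /-- `d` is multiplicative -/
  d_mul : ∀ a b : A, d (a * b) = d a * d b
  /-- `d(1) = 1` -/
  d_one : d 1 = 1
  /-- `d` is comultiplicative -/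
  d_comul : (Coalgebra.comul : H →ₗ[k] H ⊗[k] H) ∘ₗ d
      = map d d ∘ₗ (Coalgebra.comul : A →ₗ[k] A ⊗[k] A)
  /-- `ε∘d = ε` -/
  d_counit : (Coalgebra.counit : H →ₗ[k] k) ∘ₗ d = (Coalgebra.counit : A →ₗ[k] k)
  /-- `d(h▷a) = h₁ d(a) S(h₂)` -/
  d_act : d ∘ₗ act = LinearMap.mul' k H
      ∘ₗ map LinearMap.id (LinearMap.mul' k H
            ∘ₗ map LinearMap.id (HopfAlgebra.antipode (R := k) : H →ₗ[k] H)
            ∘ₗ (TensorProduct.comm k H H).toLinearMap)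
      ∘ₗ (TensorProduct.assoc k H H H).toLinearMap
      ∘ₗ map (Coalgebra.comul : H →ₗ[k] H ⊗[k] H) d
  /-- `d(a)▷b = a₁ b S(a₂)` -/
  crossed : act ∘ₗ map d LinearMap.id = LinearMap.mul' k A
      ∘ₗ map LinearMap.id (LinearMap.mul' k A
            ∘ₗ map LinearMap.id (HopfAlgebra.antipode (R := k) : A →ₗ[k] A)
            ∘ₗ (TensorProduct.comm k A A).toLinearMap)
      ∘ₗ (TensorProduct.assoc k A A A).toLinearMap
      ∘ₗ map (Coalgebra.comul : A →ₗ[k] A ⊗[k] A) LinearMap.id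


/-! ### Auxiliary material -/

set_option maxHeartbeats 1000000 in
set_option synthInstance.maxHeartbeats 200000 in
theorem _dummy_heartbeat_test : True := trivial

set_option maxHeartbeats 1000000
set_option synthInstance.maxHeartbeats 200000

namespace Prop27Aux
open Coalgebra LinearMap HopfAlgebra

section Collapse
variable {k C : Type*} [Field k] [AddCommMonoid C] [Module k C] [Coalgebra k C]

lemma sum_eps_left {a : C} (r : Repr k a (C × C)) :
    ∑ i ∈ r.index, (counit (R := k) (r.left i)) • r.right i = a := by
  have h := congrArg (TensorProduct.lid k C) (Coalgebra.sum_counit_tmul_eq r)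
  simp only [map_sum, lid_tmul, one_smul] at h
  exact h

lemma sum_eps_right {a : C} (r : Repr k a (C × C)) :
    ∑ i ∈ r.index, (counit (R := k) (r.right i)) • r.left i = a := by
  have h := congrArg (TensorProduct.rid k C) (Coalgebra.sum_tmul_counit_eq r)
  simp only [map_sum, rid_tmul, one_smul] at h
  exact h

/-- right-comb four-fold comultiplication -/
def Ncomb : C →ₗ[k] C ⊗[k] (C ⊗[k] (C ⊗[k] C)) :=
  lTensor C (lTensor C comul) ∘ₗ lTensor C comul ∘ₗ comul

lemma T_norm :
    (map comul comul ∘ₗ comul : C →ₗ[k] (C ⊗[k] C) ⊗[k] (C ⊗[k] C))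
      = (TensorProduct.assoc k C C (C ⊗[k] C)).symm.toLinearMap ∘ₗ Ncomb := by
  have h1 : (map comul comul : C ⊗[k] C →ₗ[k] (C ⊗[k] C) ⊗[k] (C ⊗[k] C))
      = lTensor (C ⊗[k] C) comul ∘ₗ rTensor C comul :=
    (LinearMap.lTensor_comp_rTensor _ _ _).symm
  have h2 : (lTensor (C ⊗[k] C) (comul : C →ₗ[k] C ⊗[k] C)) ∘ₗ
        (TensorProduct.assoc k C C C).symm.toLinearMap
      = (TensorProduct.assoc k C C (C ⊗[k] C)).symm.toLinearMap
          ∘ₗ lTensor C (lTensor C comul) := by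
    ext x y z
    simp
  calc map comul comul ∘ₗ (comul : C →ₗ[k] C ⊗[k] C)
      = lTensor (C ⊗[k] C) comul ∘ₗ (rTensor C comul ∘ₗ comul) := by
        rw [h1, comp_assoc]
    _ = lTensor (C ⊗[k] C) comul ∘ₗ ((TensorProduct.assoc k C C C).symm.toLinearMap
          ∘ₗ lTensor C comul ∘ₗ comul) := by rw [Coalgebra.coassoc_symm]
    _ = ((lTensor (C ⊗[k] C) comul ∘ₗ (TensorProduct.assoc k C C C).symm.toLinearMap)
          ∘ₗ lTensor C comul) ∘ₗ comul := by simp only [comp_assoc]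
    _ = (TensorProduct.assoc k C C (C ⊗[k] C)).symm.toLinearMap ∘ₗ Ncomb := by
        rw [h2, Ncomb]; simp only [comp_assoc]

/-- four-leg coassociativity: `(Δ⊗Δ)Δ` via the `(1,(2 3),4)` grouping -/
lemma T_mid :
    (map comul comul ∘ₗ comul : C →ₗ[k] (C ⊗[k] C) ⊗[k] (C ⊗[k] C))
      = (TensorProduct.assoc k C C (C ⊗[k] C)).symm.toLinearMap
          ∘ₗ lTensor C (TensorProduct.assoc k C C C).toLinearMap
          ∘ₗ lTensor C (rTensor C comul)
          ∘ₗ lTensor C comul ∘ₗ comul := by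
  rw [T_norm]
  congr 1
  calc Ncomb (k := k) (C := C)
      = lTensor C ((TensorProduct.assoc k C C C).toLinearMap
            ∘ₗ rTensor C comul ∘ₗ comul) ∘ₗ comul := by
        rw [Ncomb, Coalgebra.coassoc]
        simp only [lTensor_comp, comp_assoc]
    _ = lTensor C (TensorProduct.assoc k C C C).toLinearMap
          ∘ₗ lTensor C (rTensor C comul) ∘ₗ lTensor C comul ∘ₗ comul := by
        simp only [lTensor_comp, comp_assoc]

end Collapse

section Conv
variable {k A B : Type*} [Field k] [Ring A] [HopfAlgebra k A] [Ring B] [Algebra k B]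

def conv (f g : A →ₗ[k] B) : A →ₗ[k] B :=
  LinearMap.mul' k B ∘ₗ TensorProduct.map f g ∘ₗ comul

def cunit : A →ₗ[k] B := Algebra.linearMap k B ∘ₗ counit

lemma conv_apply_repr (f g : A →ₗ[k] B) {a : A} (r : Repr k a (A × A)) :
    conv f g a = ∑ i ∈ r.index, f (r.left i) * g (r.right i) := by
  simp only [conv, comp_apply, ← r.eq, map_sum, TensorProduct.map_tmul, mul'_apply]

lemma conv_assoc (f g h : A →ₗ[k] B) : conv (conv f g) h = conv f (conv g h) := by
  ext a
  set r := Repr.arbitrary k a with hr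
  set s : ∀ i : r.ι, Repr k (r.left i) (A × A) := fun i => Repr.arbitrary k (r.left i) with hs
  set t : ∀ i : r.ι, Repr k (r.right i) (A × A) := fun i => Repr.arbitrary k (r.right i) with ht
  have key := Coalgebra.sum_map_tmul_tmul_eq (R := k) f g h a (repr := r) (a₁ := s) (a₂ := t)
  have key2 := congrArg (LinearMap.mul' k B ∘ₗ LinearMap.lTensor B (LinearMap.mul' k B)) key
  simp only [map_sum, comp_apply, lTensor_tmul, mul'_apply] at key2
  calc conv (conv f g) h a
      = ∑ i ∈ r.index, (conv f g) (r.left i) * h (r.right i) := conv_apply_repr _ _ r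
    _ = ∑ i ∈ r.index, ∑ j ∈ (s i).index,
          f ((s i).left j) * (g ((s i).right j) * h (r.right i)) := by
        refine Finset.sum_congr rfl fun i _ => ?_
        rw [conv_apply_repr f g (s i), Finset.sum_mul]
        exact Finset.sum_congr rfl fun j _ => mul_assoc _ _ _
    _ = ∑ i ∈ r.index, ∑ j ∈ (t i).index,
          f (r.left i) * (g ((t i).left j) * h ((t i).right j)) := key2.symm
    _ = ∑ i ∈ r.index, f (r.left i) * ((conv g h) (r.right i)) := by
        refine Finset.sum_congr rfl fun i _ => ?_
        rw [conv_apply_repr g h (t i), Finset.mul_sum]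
    _ = conv f (conv g h) a := (conv_apply_repr _ _ r).symm

lemma conv_cunit (f : A →ₗ[k] B) : conv f cunit = f := by
  ext a
  set r := Repr.arbitrary k a with hr
  rw [conv_apply_repr f cunit r]
  calc ∑ i ∈ r.index, f (r.left i) * cunit (r.right i)
      = ∑ i ∈ r.index, f ((counit (R := k) (r.right i)) • r.left i) := by
        refine Finset.sum_congr rfl fun i _ => ?_
        rw [map_smul, cunit, comp_apply, Algebra.linearMap_apply, ← Algebra.commutes,
          ← Algebra.smul_def]
    _ = f a := by rw [← map_sum, sum_eps_right r]

lemma cunit_conv (f : A →ₗ[k] B) : conv cunit f = f := by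
  ext a
  set r := Repr.arbitrary k a with hr
  rw [conv_apply_repr cunit f r]
  calc ∑ i ∈ r.index, cunit (r.left i) * f (r.right i)
      = ∑ i ∈ r.index, f ((counit (R := k) (r.left i)) • r.right i) := by
        refine Finset.sum_congr rfl fun i _ => ?_
        rw [map_smul, cunit, comp_apply, Algebra.linearMap_apply, ← Algebra.smul_def]
    _ = f a := by rw [← map_sum, sum_eps_left r]

end Conv

section AntipodeFacts
variable {k A : Type*} [Field k] [Ring A] [HopfAlgebra k A]

lemma comul_one' : (comul : A →ₗ[k] A ⊗[k] A) 1 = 1 ⊗ₜ[k] 1 := by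
  have := map_one (Bialgebra.comulAlgHom k A)
  rw [Algebra.TensorProduct.one_def] at this
  exact this

lemma counit_one' : (counit : A →ₗ[k] k) 1 = 1 := map_one (Bialgebra.counitAlgHom k A)

lemma antipode_one' : (antipode (R := k) : A →ₗ[k] A) 1 = 1 := by
  have h := HopfAlgebra.mul_antipode_rTensor_comul_apply (R := k) (a := (1 : A))
  rw [comul_one'] at h
  simpa [counit_one'] using h

lemma counit_antipode' (a : A) :
    (counit : A →ₗ[k] k) ((antipode (R := k) : A →ₗ[k] A) a) = counit a := by
  set r := Repr.arbitrary k a with hr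
  have h := congrArg (counit : A →ₗ[k] k) (sum_antipode_mul_eq_algebraMap_counit (R := k) r)
  simp only [map_sum, Bialgebra.counit_mul] at h
  rw [Bialgebra.counit_algebraMap] at h
  calc (counit : A →ₗ[k] k) ((antipode (R := k) : A →ₗ[k] A) a)
      = (counit : A →ₗ[k] k) ((antipode (R := k) : A →ₗ[k] A)
          (∑ i ∈ r.index, (counit (R := k) (r.right i)) • r.left i)) := by
        rw [sum_eps_right r]
    _ = ∑ i ∈ r.index, (counit (R := k) ((antipode (R := k) : A →ₗ[k] A) (r.left i)))
          * counit (R := k) (r.right i) := by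
        simp [map_sum, mul_comm]
    _ = counit (R := k) a := h

lemma conv_comul_comulS :
    conv (comul) ((comul : A →ₗ[k] A ⊗[k] A) ∘ₗ (antipode (R := k) : A →ₗ[k] A)) = cunit := by
  ext a
  set r := Repr.arbitrary k a with hr
  rw [conv_apply_repr _ _ r]
  calc ∑ i ∈ r.index, comul (r.left i)
        * ((comul : A →ₗ[k] A ⊗[k] A) ∘ₗ (antipode (R := k) : A →ₗ[k] A)) (r.right i)
      = (comul : A →ₗ[k] A ⊗[k] A)
          (∑ i ∈ r.index, r.left i * (antipode (R := k) : A →ₗ[k] A) (r.right i)) := by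
        rw [map_sum]
        exact Finset.sum_congr rfl fun i _ => (Bialgebra.comul_mul _ _).symm
    _ = (comul : A →ₗ[k] A ⊗[k] A) (algebraMap k A (counit (R := k) a)) := by
        rw [sum_mul_antipode_eq_algebraMap_counit r]
    _ = cunit a := by
        rw [Bialgebra.comul_algebraMap]; rfl

/-- `(S⊗S)∘τ∘Δ` -/
def Gmap : A →ₗ[k] A ⊗[k] A :=
  TensorProduct.map (antipode (R := k) : A →ₗ[k] A) (antipode (R := k) : A →ₗ[k] A)
    ∘ₗ (TensorProduct.comm k A A).toLinearMap ∘ₗ comul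

/-- the plumbing part of `conv Gmap comul` after `T_mid` normalisation -/
def Qmap : A ⊗[k] ((A ⊗[k] A) ⊗[k] A) →ₗ[k] A ⊗[k] A :=
  LinearMap.mul' k (A ⊗[k] A)
    ∘ₗ TensorProduct.map
        (TensorProduct.map (antipode (R := k) : A →ₗ[k] A) (antipode (R := k) : A →ₗ[k] A)
          ∘ₗ (TensorProduct.comm k A A).toLinearMap) LinearMap.id
    ∘ₗ (TensorProduct.assoc k A A (A ⊗[k] A)).symm.toLinearMap
    ∘ₗ lTensor A (TensorProduct.assoc k A A A).toLinearMap

lemma conv_G_comul : conv (Gmap) (comul : A →ₗ[k] A ⊗[k] A) = cunit := by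
  have step1 : TensorProduct.map (Gmap (k := k) (A := A)) (comul : A →ₗ[k] A ⊗[k] A)
      = TensorProduct.map
          (TensorProduct.map (antipode (R := k) : A →ₗ[k] A) (antipode (R := k) : A →ₗ[k] A)
            ∘ₗ (TensorProduct.comm k A A).toLinearMap) LinearMap.id
          ∘ₗ TensorProduct.map comul comul := by
    rw [← TensorProduct.map_comp, id_comp, Gmap]
    simp only [comp_assoc]
  have factor2 : conv (Gmap) (comul : A →ₗ[k] A ⊗[k] A)
      = Qmap ∘ₗ lTensor A (rTensor A comul) ∘ₗ lTensor A comul ∘ₗ comul := by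
    rw [conv, step1]
    have := congrArg (fun (F : A →ₗ[k] (A ⊗[k] A) ⊗[k] (A ⊗[k] A)) =>
      LinearMap.mul' k (A ⊗[k] A)
        ∘ₗ TensorProduct.map
            (TensorProduct.map (antipode (R := k) : A →ₗ[k] A) (antipode (R := k) : A →ₗ[k] A)
              ∘ₗ (TensorProduct.comm k A A).toLinearMap) LinearMap.id ∘ₗ F)
      (T_mid (k := k) (C := A))
    simp only [comp_assoc] at this ⊢
    exact this
  rw [factor2]
  ext a
  set r := Repr.arbitrary k a with hr
  set t : ∀ i : r.ι, Repr k (r.right i) (A × A) := fun i => Repr.arbitrary k (r.right i) with ht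
  set u : ∀ i : r.ι, ∀ j : (t i).ι, Repr k ((t i).left j) (A × A) :=
    fun i j => Repr.arbitrary k ((t i).left j) with hu
  have Qpure : ∀ x y z w : A,
      Qmap (k := k) (x ⊗ₜ[k] ((y ⊗ₜ[k] z) ⊗ₜ[k] w))
        = ((antipode (R := k) : A →ₗ[k] A) y * z) ⊗ₜ[k]
            ((antipode (R := k) : A →ₗ[k] A) x * w) := by
    intro x y z w
    simp [Qmap, Algebra.TensorProduct.tmul_mul_tmul]
  have e1 : (lTensor A comul) ((comul : A →ₗ[k] A ⊗[k] A) a)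
      = ∑ i ∈ r.index, ∑ j ∈ (t i).index,
          r.left i ⊗ₜ[k] ((t i).left j ⊗ₜ[k] (t i).right j) := by
    rw [← r.eq, map_sum]
    exact Finset.sum_congr rfl fun i _ => by rw [lTensor_tmul, ← (t i).eq, tmul_sum]
  have term : ∀ i ∈ r.index, ∀ j ∈ (t i).index,
      Qmap (k := k) ((lTensor A (rTensor A comul))
          (r.left i ⊗ₜ[k] ((t i).left j ⊗ₜ[k] (t i).right j)))
        = (1 : A) ⊗ₜ[k] ((antipode (R := k) : A →ₗ[k] A) (r.left i)
            * ((counit (R := k) ((t i).left j)) • (t i).right j)) := by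
    intro i _ j _
    rw [lTensor_tmul, rTensor_tmul, ← (u i j).eq, sum_tmul, tmul_sum, map_sum]
    calc ∑ m ∈ (u i j).index,
          Qmap (k := k) (r.left i ⊗ₜ[k]
            (((u i j).left m ⊗ₜ[k] (u i j).right m) ⊗ₜ[k] (t i).right j))
        = (∑ m ∈ (u i j).index,
            (antipode (R := k) : A →ₗ[k] A) ((u i j).left m) * (u i j).right m)
              ⊗ₜ[k] ((antipode (R := k) : A →ₗ[k] A) (r.left i) * (t i).right j) := by
          rw [sum_tmul]
          exact Finset.sum_congr rfl fun m _ => Qpure _ _ _ _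
      _ = (algebraMap k A (counit (R := k) ((t i).left j)))
            ⊗ₜ[k] ((antipode (R := k) : A →ₗ[k] A) (r.left i) * (t i).right j) := by
          rw [sum_antipode_mul_eq_algebraMap_counit (u i j)]
      _ = (1 : A) ⊗ₜ[k] ((antipode (R := k) : A →ₗ[k] A) (r.left i)
            * ((counit (R := k) ((t i).left j)) • (t i).right j)) := by
          rw [Algebra.algebraMap_eq_smul_one, smul_tmul, mul_smul_comm]
  calc (Qmap ∘ₗ lTensor A (rTensor A comul) ∘ₗ lTensor A comul ∘ₗ comul) a
      = ∑ i ∈ r.index, ∑ j ∈ (t i).index,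
          Qmap (k := k) ((lTensor A (rTensor A comul))
            (r.left i ⊗ₜ[k] ((t i).left j ⊗ₜ[k] (t i).right j))) := by
        simp only [comp_apply, e1, map_sum]
    _ = ∑ i ∈ r.index, (1 : A) ⊗ₜ[k]
          ((antipode (R := k) : A →ₗ[k] A) (r.left i) * r.right i) := by
        refine Finset.sum_congr rfl fun i hi => ?_
        rw [Finset.sum_congr rfl (term i hi)]
        rw [← tmul_sum, ← Finset.mul_sum, sum_eps_left (t i)]
    _ = (1 : A) ⊗ₜ[k] (algebraMap k A (counit (R := k) a)) := by
        rw [← tmul_sum, sum_antipode_mul_eq_algebraMap_counit r]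
    _ = cunit a := by
        rw [cunit, comp_apply, Algebra.linearMap_apply, Algebra.algebraMap_eq_smul_one,
          tmul_smul, Algebra.algebraMap_eq_smul_one, Algebra.TensorProduct.one_def]

/-- anti-comultiplicativity of the antipode: `Δ∘S = (S⊗S)∘τ∘Δ`. -/
lemma comul_antipode' :
    (comul : A →ₗ[k] A ⊗[k] A) ∘ₗ (antipode (R := k) : A →ₗ[k] A)
      = TensorProduct.map (antipode (R := k) : A →ₗ[k] A) (antipode (R := k) : A →ₗ[k] A)
          ∘ₗ (TensorProduct.comm k A A).toLinearMap ∘ₗ comul := by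
  calc (comul : A →ₗ[k] A ⊗[k] A) ∘ₗ (antipode (R := k) : A →ₗ[k] A)
      = conv cunit ((comul : A →ₗ[k] A ⊗[k] A) ∘ₗ (antipode (R := k) : A →ₗ[k] A)) :=
        (cunit_conv _).symm
    _ = conv (conv (Gmap) (comul : A →ₗ[k] A ⊗[k] A))
          ((comul : A →ₗ[k] A ⊗[k] A) ∘ₗ (antipode (R := k) : A →ₗ[k] A)) := by
        rw [conv_G_comul]
    _ = conv (Gmap) (conv (comul : A →ₗ[k] A ⊗[k] A)
          ((comul : A →ₗ[k] A ⊗[k] A) ∘ₗ (antipode (R := k) : A →ₗ[k] A))) := conv_assoc _ _ _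
    _ = conv (Gmap) cunit := by rw [conv_comul_comulS]
    _ = Gmap := conv_cunit _
  
lemma comul_antipode_apply (x : A) {rep : Repr k x (A × A)} :
    (comul : A →ₗ[k] A ⊗[k] A) ((antipode (R := k) : A →ₗ[k] A) x)
      = ∑ j ∈ rep.index, (antipode (R := k) : A →ₗ[k] A) (rep.right j)
          ⊗ₜ[k] (antipode (R := k) : A →ₗ[k] A) (rep.left j) := by
  have h := LinearMap.congr_fun (comul_antipode' (k := k) (A := A)) x
  rw [comp_apply] at h
  rw [h]
  simp only [comp_apply, LinearEquiv.coe_coe, ← rep.eq, map_sum, TensorProduct.comm_tmul,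
    TensorProduct.map_tmul]

end AntipodeFacts
end Prop27Aux

namespace Prop27Aux
open Coalgebra LinearMap HopfAlgebra

section Main
variable (k A H : Type*) [Field k] [Ring A] [Ring H] [HopfAlgebra k A] [HopfAlgebra k H]

/-- `(x⊗u)⊗p ↦ x⊗(u*p)` -/
def B2 : (A ⊗[k] H) ⊗[k] H →ₗ[k] A ⊗[k] H :=
  map LinearMap.id (LinearMap.mul' k H) ∘ₗ (TensorProduct.assoc k A H H).toLinearMap

/-- `((x⊗u)⊗(y⊗v))⊗(p⊗q) ↦ (x⊗up)⊗(y⊗vq)` -/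
def Bmap : ((A ⊗[k] H) ⊗[k] (A ⊗[k] H)) ⊗[k] (H ⊗[k] H) →ₗ[k] (A ⊗[k] H) ⊗[k] (A ⊗[k] H) :=
  map (B2 k A H) (B2 k A H)
    ∘ₗ (tensorTensorTensorComm k (A ⊗[k] H) (A ⊗[k] H) H H).toLinearMap

/-- `(Δ⊗Δ)Δ` -/
def Tq : A →ₗ[k] (A ⊗[k] A) ⊗[k] (A ⊗[k] A) := map comul comul ∘ₗ comul

variable (d : A →ₗ[k] H)

/-- `(x₁⊗x₂)⊗(x₃⊗x₄) ↦ (Sx₃⊗dx₄)⊗(Sx₁⊗dx₂)` -/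
def XiL : (A ⊗[k] A) ⊗[k] (A ⊗[k] A) →ₗ[k] (A ⊗[k] H) ⊗[k] (A ⊗[k] H) :=
  (TensorProduct.comm k (A ⊗[k] H) (A ⊗[k] H)).toLinearMap
    ∘ₗ map (map (antipode (R := k) : A →ₗ[k] A) d) (map (antipode (R := k) : A →ₗ[k] A) d)

/-- `(x₁⊗x₂)⊗(x₃⊗x₄) ↦ (Sx₂⊗dx₃)⊗(Sx₁⊗dx₄)` -/
def XiR : (A ⊗[k] A) ⊗[k] (A ⊗[k] A) →ₗ[k] (A ⊗[k] H) ⊗[k] (A ⊗[k] H) :=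
  (tensorTensorTensorComm k A A H H).toLinearMap
    ∘ₗ map (map (antipode (R := k) : A →ₗ[k] A) (antipode (R := k) : A →ₗ[k] A)
          ∘ₗ (TensorProduct.comm k A A).toLinearMap) (map d d)

variable {k A H}

lemma Bmap_tmul (x y : A) (u v p q' : H) :
    Bmap k A H (((x ⊗ₜ[k] u) ⊗ₜ[k] (y ⊗ₜ[k] v)) ⊗ₜ[k] (p ⊗ₜ[k] q'))
      = (x ⊗ₜ[k] (u * p)) ⊗ₜ[k] (y ⊗ₜ[k] (v * q')) := by
  simp [Bmap, B2]

lemma XiL_tmul (x₁ x₂ x₃ x₄ : A) :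
    XiL k A H d ((x₁ ⊗ₜ[k] x₂) ⊗ₜ[k] (x₃ ⊗ₜ[k] x₄))
      = ((antipode (R := k) : A →ₗ[k] A) x₃ ⊗ₜ[k] d x₄)
          ⊗ₜ[k] ((antipode (R := k) : A →ₗ[k] A) x₁ ⊗ₜ[k] d x₂) := by
  simp [XiL]

lemma XiR_tmul (x₁ x₂ x₃ x₄ : A) :
    XiR k A H d ((x₁ ⊗ₜ[k] x₂) ⊗ₜ[k] (x₃ ⊗ₜ[k] x₄))
      = ((antipode (R := k) : A →ₗ[k] A) x₂ ⊗ₜ[k] d x₃)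
          ⊗ₜ[k] ((antipode (R := k) : A →ₗ[k] A) x₁ ⊗ₜ[k] d x₄) := by
  simp [XiR]

lemma tmap_tmul (x : A) (u : H) : tmap k A H d (x ⊗ₜ[k] u) = d x * u := by
  simp [tmap]

lemma SS_tmul (x : A) (u : H) {rep : Repr k x (A × A)} :
    SS k A H d (x ⊗ₜ[k] u)
      = ∑ j ∈ rep.index, (antipode (R := k) : A →ₗ[k] A) (rep.left j)
          ⊗ₜ[k] (d (rep.right j) * u) := by
  simp only [SS, comp_apply, TensorProduct.map_tmul, id_coe, id_eq]
  rw [← rep.eq, sum_tmul, map_sum, map_sum]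
  exact Finset.sum_congr rfl fun j _ => by
    simp [tmap_tmul]

lemma comul1_pure (x : A) (u : H) :
    comul1 k A H (x ⊗ₜ[k] u)
      = (tensorTensorTensorComm k A A H H) (comul x ⊗ₜ[k] comul u) := by
  simp [comul1]

lemma Tq_apply (a : A) (r : Repr k a (A × A)) (s : ∀ i : r.ι, Repr k (r.left i) (A × A))
    (t : ∀ i : r.ι, Repr k (r.right i) (A × A)) :
    Tq k A a = ∑ i ∈ r.index, ∑ j ∈ (s i).index, ∑ j' ∈ (t i).index,
        ((s i).left j ⊗ₜ[k] (s i).right j) ⊗ₜ[k] ((t i).left j' ⊗ₜ[k] (t i).right j') := by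
  simp only [Tq, comp_apply, ← r.eq, map_sum, TensorProduct.map_tmul]
  exact Finset.sum_congr rfl fun i _ => by
    rw [← (s i).eq, ← (t i).eq, sum_tmul]
    exact Finset.sum_congr rfl fun j _ => by rw [tmul_sum]

section withd
variable (hd_comul : (comul : H →ₗ[k] H ⊗[k] H) ∘ₗ d = map d d ∘ₗ (comul : A →ₗ[k] A ⊗[k] A))

include hd_comul in
lemma comul_d (y : A) : comul (d y) = map d d (comul y) :=
  LinearMap.congr_fun hd_comul y

include hd_comul in
/-- evaluation of the right side `Δ∘𝒮` -/
lemma RHS_eval (a : A) (h : H) :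
    comul1 k A H (SS k A H d (a ⊗ₜ[k] h))
      = Bmap k A H (XiR k A H d (Tq k A a) ⊗ₜ[k] comul h) := by
  set r := Repr.arbitrary k a with hr
  set s : ∀ i : r.ι, Repr k (r.left i) (A × A) := fun i => Repr.arbitrary k (r.left i) with hs
  set t : ∀ i : r.ι, Repr k (r.right i) (A × A) := fun i => Repr.arbitrary k (r.right i) with ht
  set q := Repr.arbitrary k h with hq
  have hL : comul1 k A H (SS k A H d (a ⊗ₜ[k] h))
      = ∑ i ∈ r.index, ∑ j ∈ (s i).index, ∑ j' ∈ (t i).index, ∑ m ∈ q.index,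
          ((antipode (R := k) : A →ₗ[k] A) ((s i).right j) ⊗ₜ[k] (d ((t i).left j') * q.left m))
            ⊗ₜ[k] ((antipode (R := k) : A →ₗ[k] A) ((s i).left j)
                ⊗ₜ[k] (d ((t i).right j') * q.right m)) := by
    rw [SS_tmul d a h (rep := r), map_sum]
    refine Finset.sum_congr rfl fun i _ => ?_
    rw [comul1_pure]
    rw [comul_antipode_apply (rep := s i)]
    have hmul : (comul : H →ₗ[k] H ⊗[k] H) (d (r.right i) * h)
        = ∑ j' ∈ (t i).index, ∑ m ∈ q.index,
            (d ((t i).left j') * q.left m) ⊗ₜ[k] (d ((t i).right j') * q.right m) := by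
      rw [Bialgebra.comul_mul, comul_d d hd_comul, ← (t i).eq, ← q.eq, map_sum]
      simp only [TensorProduct.map_tmul]
      rw [Finset.sum_mul_sum]
      simp only [Algebra.TensorProduct.tmul_mul_tmul]
    rw [hmul, sum_tmul, map_sum]
    refine Finset.sum_congr rfl fun j _ => ?_
    rw [tmul_sum, map_sum]
    refine Finset.sum_congr rfl fun j' _ => ?_
    rw [tmul_sum, map_sum]
    refine Finset.sum_congr rfl fun m _ => ?_
    rw [tensorTensorTensorComm_tmul]
  have hR : Bmap k A H (XiR k A H d (Tq k A a) ⊗ₜ[k] comul h)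
      = ∑ i ∈ r.index, ∑ j ∈ (s i).index, ∑ j' ∈ (t i).index, ∑ m ∈ q.index,
          ((antipode (R := k) : A →ₗ[k] A) ((s i).right j) ⊗ₜ[k] (d ((t i).left j') * q.left m))
            ⊗ₜ[k] ((antipode (R := k) : A →ₗ[k] A) ((s i).left j)
                ⊗ₜ[k] (d ((t i).right j') * q.right m)) := by
    rw [Tq_apply a r s t, ← q.eq]
    simp only [map_sum, sum_tmul, XiR_tmul]
    refine Finset.sum_congr rfl fun i _ => Finset.sum_congr rfl fun j _ =>
      Finset.sum_congr rfl fun j' _ => ?_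
    rw [tmul_sum, map_sum]
    exact Finset.sum_congr rfl fun m _ => Bmap_tmul _ _ _ _ _ _
  rw [hL, hR]

end withd

end Main
end Prop27Aux

namespace Prop27Aux
open Coalgebra LinearMap HopfAlgebra

section Main2
variable {k A H : Type*} [Field k] [Ring A] [Ring H] [HopfAlgebra k A] [HopfAlgebra k H]
variable (d : A →ₗ[k] H)

/-- evaluation of the left side `τ∘(𝒮⊗𝒮)∘Δ` -/
lemma LHS_eval (a : A) (h : H) :
    (TensorProduct.comm k (A ⊗[k] H) (A ⊗[k] H))
        (map (SS k A H d) (SS k A H d) (comul1 k A H (a ⊗ₜ[k] h)))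
      = Bmap k A H (XiL k A H d (Tq k A a)
          ⊗ₜ[k] (TensorProduct.comm k H H) (comul h)) := by
  set r := Repr.arbitrary k a with hr
  set s : ∀ i : r.ι, Repr k (r.left i) (A × A) := fun i => Repr.arbitrary k (r.left i) with hs
  set t : ∀ i : r.ι, Repr k (r.right i) (A × A) := fun i => Repr.arbitrary k (r.right i) with ht
  set q := Repr.arbitrary k h with hq
  have hL : (TensorProduct.comm k (A ⊗[k] H) (A ⊗[k] H))
        (map (SS k A H d) (SS k A H d) (comul1 k A H (a ⊗ₜ[k] h)))
      = ∑ i ∈ r.index, ∑ m ∈ q.index, ∑ j ∈ (s i).index, ∑ j' ∈ (t i).index,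
          ((antipode (R := k) : A →ₗ[k] A) ((t i).left j') ⊗ₜ[k] (d ((t i).right j') * q.right m))
            ⊗ₜ[k] ((antipode (R := k) : A →ₗ[k] A) ((s i).left j)
                ⊗ₜ[k] (d ((s i).right j) * q.left m)) := by
    rw [comul1_pure, ← r.eq, ← q.eq, sum_tmul, map_sum, map_sum, map_sum]
    refine Finset.sum_congr rfl fun i _ => ?_
    rw [tmul_sum, map_sum, map_sum, map_sum]
    refine Finset.sum_congr rfl fun m _ => ?_
    rw [tensorTensorTensorComm_tmul, TensorProduct.map_tmul,
      SS_tmul d _ _ (rep := s i), SS_tmul d _ _ (rep := t i), sum_tmul, map_sum]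
    refine Finset.sum_congr rfl fun j _ => ?_
    rw [tmul_sum, map_sum]
    exact Finset.sum_congr rfl fun j' _ => by rw [TensorProduct.comm_tmul]
  have hR : Bmap k A H (XiL k A H d (Tq k A a)
        ⊗ₜ[k] (TensorProduct.comm k H H) (comul h))
      = ∑ i ∈ r.index, ∑ j ∈ (s i).index, ∑ j' ∈ (t i).index, ∑ m ∈ q.index,
          ((antipode (R := k) : A →ₗ[k] A) ((t i).left j') ⊗ₜ[k] (d ((t i).right j') * q.right m))
            ⊗ₜ[k] ((antipode (R := k) : A →ₗ[k] A) ((s i).left j)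
                ⊗ₜ[k] (d ((s i).right j) * q.left m)) := by
    have hq' : (TensorProduct.comm k H H) (comul h)
        = ∑ m ∈ q.index, q.right m ⊗ₜ[k] q.left m := by
      rw [← q.eq, map_sum]
      exact Finset.sum_congr rfl fun m _ => TensorProduct.comm_tmul _ _ _ _ _
    rw [Tq_apply a r s t, hq']
    simp only [map_sum, sum_tmul, XiL_tmul]
    refine Finset.sum_congr rfl fun i _ => Finset.sum_congr rfl fun j _ =>
      Finset.sum_congr rfl fun j' _ => ?_
    rw [tmul_sum, map_sum]
    exact Finset.sum_congr rfl fun m _ => Bmap_tmul _ _ _ _ _ _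
  rw [hL, hR]
  refine Finset.sum_congr rfl fun i _ => ?_
  calc ∑ m ∈ q.index, ∑ j ∈ (s i).index, ∑ j' ∈ (t i).index, _
      = ∑ j ∈ (s i).index, ∑ m ∈ q.index, ∑ j' ∈ (t i).index, _ := Finset.sum_comm
    _ = ∑ j ∈ (s i).index, ∑ j' ∈ (t i).index, ∑ m ∈ q.index, _ :=
        Finset.sum_congr rfl fun j _ => Finset.sum_comm

end Main2
end Prop27Aux

namespace Prop27Aux
open Coalgebra LinearMap HopfAlgebra

section Core
variable {k A H : Type*} [Field k] [Ring A] [Ring H] [HopfAlgebra k A] [HopfAlgebra k H]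
variable (d : A →ₗ[k] H)

/-- `ρ_S = (S⊗d)∘Δ` -/
def rhoS : A →ₗ[k] A ⊗[k] H := map (antipode (R := k) : A →ₗ[k] A) d ∘ₗ comul

/-- `g_S = (ρ_S⊗d)∘Δ` -/
def gS : A →ₗ[k] (A ⊗[k] H) ⊗[k] H := map (rhoS d) d ∘ₗ comul

end Core

section CoreDefs
variable (k A H : Type*) [Field k] [Ring A] [Ring H] [HopfAlgebra k A] [HopfAlgebra k H]

/-- `x⊗(w⊗v) ↦ w⊗(Sx⊗v)` -/
def P2 : A ⊗[k] ((A ⊗[k] H) ⊗[k] H) →ₗ[k] (A ⊗[k] H) ⊗[k] (A ⊗[k] H) :=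
  (TensorProduct.assoc k (A ⊗[k] H) A H).toLinearMap
    ∘ₗ map ((TensorProduct.comm k A (A ⊗[k] H)).toLinearMap
          ∘ₗ map (antipode (R := k) : A →ₗ[k] A) LinearMap.id) LinearMap.id
    ∘ₗ (TensorProduct.assoc k A (A ⊗[k] H) H).symm.toLinearMap

end CoreDefs

section Core2
variable {k A H : Type*} [Field k] [Ring A] [Ring H] [HopfAlgebra k A] [HopfAlgebra k H]
variable (d : A →ₗ[k] H)

section flip
variable (hA : map (LinearMap.id : A →ₗ[k] A) d ∘ₗ comul
    = map LinearMap.id d ∘ₗ (TensorProduct.comm k A A).toLinearMap ∘ₗ comul)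

include hA in
lemma flip_d {X : Type*} [AddCommMonoid X] [Module k X] (F : A →ₗ[k] X) :
    map F d ∘ₗ comul = map F d ∘ₗ (TensorProduct.comm k A A).toLinearMap ∘ₗ comul := by
  have h1 : (map F d : A ⊗[k] A →ₗ[k] X ⊗[k] H)
      = map F LinearMap.id ∘ₗ map LinearMap.id d := by
    rw [← TensorProduct.map_comp, comp_id, id_comp]
  rw [h1]
  simp only [comp_assoc]
  rw [hA]

include hA in
lemma gS_flip : gS d = map (rhoS d) d ∘ₗ (TensorProduct.comm k A A).toLinearMap ∘ₗ comul := by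
  rw [gS]; exact flip_d d hA _
end flip

lemma mapRhoS_decomp :
    (map (rhoS d) d : A ⊗[k] A →ₗ[k] (A ⊗[k] H) ⊗[k] H)
      = map (map (antipode (R := k) : A →ₗ[k] A) d) d ∘ₗ rTensor A comul := by
  have : (rTensor A comul : A ⊗[k] A →ₗ[k] (A ⊗[k] A) ⊗[k] A)
      = map comul LinearMap.id := rfl
  rw [this, ← TensorProduct.map_comp, comp_id, rhoS]

lemma XiR_norm : XiR k A H d ∘ₗ Tq k A = P2 k A H ∘ₗ lTensor A (gS d) ∘ₗ comul := by
  have plumb : XiR k A H d ∘ₗ (TensorProduct.assoc k A A (A ⊗[k] A)).symm.toLinearMap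
      = P2 k A H ∘ₗ lTensor A (map (map (antipode (R := k) : A →ₗ[k] A) d) d)
          ∘ₗ lTensor A (TensorProduct.assoc k A A A).symm.toLinearMap := by
    ext x y z w
    simp [XiR, P2]
  have expand : lTensor A (gS d) ∘ₗ (comul : A →ₗ[k] A ⊗[k] A)
      = lTensor A (map (map (antipode (R := k) : A →ₗ[k] A) d) d)
          ∘ₗ lTensor A (TensorProduct.assoc k A A A).symm.toLinearMap ∘ₗ Ncomb := by
    calc lTensor A (gS d) ∘ₗ (comul : A →ₗ[k] A ⊗[k] A)
        = lTensor A (map (map (antipode (R := k) : A →ₗ[k] A) d) d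
              ∘ₗ (rTensor A comul ∘ₗ comul)) ∘ₗ comul := by
          rw [gS, mapRhoS_decomp]; simp only [comp_assoc]
      _ = lTensor A (map (map (antipode (R := k) : A →ₗ[k] A) d) d
              ∘ₗ ((TensorProduct.assoc k A A A).symm.toLinearMap
                  ∘ₗ lTensor A comul ∘ₗ comul)) ∘ₗ comul := by
          rw [Coalgebra.coassoc_symm]
      _ = lTensor A (map (map (antipode (R := k) : A →ₗ[k] A) d) d)
            ∘ₗ lTensor A (TensorProduct.assoc k A A A).symm.toLinearMap ∘ₗ Ncomb := by
          simp only [lTensor_comp, Ncomb, comp_assoc]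
  calc XiR k A H d ∘ₗ Tq k A
      = (XiR k A H d ∘ₗ (TensorProduct.assoc k A A (A ⊗[k] A)).symm.toLinearMap) ∘ₗ Ncomb := by
        rw [Tq, T_norm]; simp only [comp_assoc]
    _ = P2 k A H ∘ₗ lTensor A (gS d) ∘ₗ comul := by
        rw [plumb, expand]; simp only [comp_assoc]

lemma XiL_norm : XiL k A H d ∘ₗ Tq k A
    = P2 k A H ∘ₗ lTensor A (map (rhoS d) d ∘ₗ (TensorProduct.comm k A A).toLinearMap ∘ₗ comul)
        ∘ₗ comul := by
  have plumb : XiL k A H d ∘ₗ (TensorProduct.assoc k A A (A ⊗[k] A)).symm.toLinearMap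
      = P2 k A H ∘ₗ lTensor A (map (map (antipode (R := k) : A →ₗ[k] A) d) d)
          ∘ₗ lTensor A (TensorProduct.comm k A (A ⊗[k] A)).toLinearMap := by
    ext x y z w
    simp [XiL, P2]
  have nat : (rTensor A (comul : A →ₗ[k] A ⊗[k] A)) ∘ₗ (TensorProduct.comm k A A).toLinearMap
      = (TensorProduct.comm k A (A ⊗[k] A)).toLinearMap ∘ₗ lTensor A comul := by
    ext x y
    simp
  have expand : lTensor A (map (rhoS d) d ∘ₗ (TensorProduct.comm k A A).toLinearMap ∘ₗ comul)
        ∘ₗ (comul : A →ₗ[k] A ⊗[k] A)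
      = lTensor A (map (map (antipode (R := k) : A →ₗ[k] A) d) d)
          ∘ₗ lTensor A (TensorProduct.comm k A (A ⊗[k] A)).toLinearMap ∘ₗ Ncomb := by
    calc lTensor A (map (rhoS d) d ∘ₗ (TensorProduct.comm k A A).toLinearMap ∘ₗ comul)
          ∘ₗ (comul : A →ₗ[k] A ⊗[k] A)
        = lTensor A (map (map (antipode (R := k) : A →ₗ[k] A) d) d
            ∘ₗ ((rTensor A comul ∘ₗ (TensorProduct.comm k A A).toLinearMap) ∘ₗ comul))
            ∘ₗ comul := by
          rw [mapRhoS_decomp]; simp only [comp_assoc]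
      _ = lTensor A (map (map (antipode (R := k) : A →ₗ[k] A) d) d
            ∘ₗ ((TensorProduct.comm k A (A ⊗[k] A)).toLinearMap ∘ₗ lTensor A comul) ∘ₗ comul)
            ∘ₗ comul := by rw [nat]
      _ = lTensor A (map (map (antipode (R := k) : A →ₗ[k] A) d) d)
            ∘ₗ lTensor A (TensorProduct.comm k A (A ⊗[k] A)).toLinearMap ∘ₗ Ncomb := by
          simp only [lTensor_comp, Ncomb, comp_assoc]
  calc XiL k A H d ∘ₗ Tq k A
      = (XiL k A H d ∘ₗ (TensorProduct.assoc k A A (A ⊗[k] A)).symm.toLinearMap) ∘ₗ Ncomb := by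
        rw [Tq, T_norm]; simp only [comp_assoc]
    _ = _ := by rw [plumb, expand]; simp only [comp_assoc]

lemma core (hA : map (LinearMap.id : A →ₗ[k] A) d ∘ₗ comul
      = map LinearMap.id d ∘ₗ (TensorProduct.comm k A A).toLinearMap ∘ₗ comul) :
    XiL k A H d ∘ₗ Tq k A = XiR k A H d ∘ₗ Tq k A := by
  rw [XiL_norm, XiR_norm, ← gS_flip d hA]

end Core2
end Prop27Aux

namespace Prop27Aux
open Coalgebra LinearMap HopfAlgebra

section Extract
variable (k A H : Type*) [Field k] [Ring A] [Ring H] [HopfAlgebra k A] [HopfAlgebra k H]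

/-- `x⊗u ↦ ε(u)•x` -/
def Om1 : A ⊗[k] H →ₗ[k] A :=
  (TensorProduct.rid k A).toLinearMap ∘ₗ lTensor A (counit : H →ₗ[k] k)

/-- `(x⊗u)⊗(y⊗v) ↦ (ε(u)•x)⊗(ε(y)•v)` -/
def Om : (A ⊗[k] H) ⊗[k] (A ⊗[k] H) →ₗ[k] A ⊗[k] H :=
  map (Om1 k A H) (smap k A H)

variable {k A H}

lemma Om1_tmul (x : A) (u : H) : Om1 k A H (x ⊗ₜ[k] u) = counit (R := k) u • x := by
  simp [Om1]

lemma smap_tmul (x : A) (u : H) : smap k A H (x ⊗ₜ[k] u) = counit (R := k) x • u := by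
  simp [smap]

lemma Bmap_one (w : (A ⊗[k] H) ⊗[k] (A ⊗[k] H)) :
    Bmap k A H (w ⊗ₜ[k] ((1 : H) ⊗ₜ[k] (1 : H))) = w := by
  have key : Bmap k A H ∘ₗ ((TensorProduct.mk k ((A ⊗[k] H) ⊗[k] (A ⊗[k] H))
        (H ⊗[k] H)).flip ((1 : H) ⊗ₜ[k] (1 : H))) = LinearMap.id := by
    ext a u b v
    simp [Bmap_tmul]
  simpa using LinearMap.congr_fun key w

lemma smap_extract (x : H ⊗[k] H) :
    map (smap k A H) (smap k A H) (Bmap k A H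
        ((((1 : A) ⊗ₜ[k] (1 : H)) ⊗ₜ[k] ((1 : A) ⊗ₜ[k] (1 : H))) ⊗ₜ[k] x)) = x := by
  have key : map (smap k A H) (smap k A H) ∘ₗ Bmap k A H
        ∘ₗ (TensorProduct.mk k ((A ⊗[k] H) ⊗[k] (A ⊗[k] H)) (H ⊗[k] H))
            (((1 : A) ⊗ₜ[k] (1 : H)) ⊗ₜ[k] ((1 : A) ⊗ₜ[k] (1 : H)))
      = LinearMap.id := by
    ext p q'
    simp [Bmap_tmul, smap_tmul, counit_one']
  simpa using LinearMap.congr_fun key x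

lemma Tq_one : Tq k A (1 : A) = ((1 : A) ⊗ₜ[k] (1 : A)) ⊗ₜ[k] ((1 : A) ⊗ₜ[k] (1 : A)) := by
  rw [Tq, comp_apply, comul_one', TensorProduct.map_tmul, comul_one']

variable (d : A →ₗ[k] H)

lemma XiL_one (hd_one : d 1 = 1) :
    XiL k A H d (Tq k A (1 : A)) = ((1 : A) ⊗ₜ[k] (1 : H)) ⊗ₜ[k] ((1 : A) ⊗ₜ[k] (1 : H)) := by
  rw [Tq_one, XiL_tmul]
  simp [antipode_one', hd_one]

lemma XiR_one (hd_one : d 1 = 1) :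
    XiR k A H d (Tq k A (1 : A)) = ((1 : A) ⊗ₜ[k] (1 : H)) ⊗ₜ[k] ((1 : A) ⊗ₜ[k] (1 : H)) := by
  rw [Tq_one, XiR_tmul]
  simp [antipode_one', hd_one]

section eps
variable (hd_counit : (counit : H →ₗ[k] k) ∘ₗ d = (counit : A →ₗ[k] k))

include hd_counit in
lemma counit_d (y : A) : counit (R := k) (d y) = counit (R := k) y :=
  LinearMap.congr_fun hd_counit y

include hd_counit in
lemma Om_XiL (a : A) :
    Om k A H (XiL k A H d (Tq k A a))
      = map (antipode (R := k) : A →ₗ[k] A) d ((TensorProduct.comm k A A) (comul a)) := by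
  set r := Repr.arbitrary k a with hr
  set s : ∀ i : r.ι, Repr k (r.left i) (A × A) := fun i => Repr.arbitrary k (r.left i) with hs
  set t : ∀ i : r.ι, Repr k (r.right i) (A × A) := fun i => Repr.arbitrary k (r.right i) with ht
  have hRHS : map (antipode (R := k) : A →ₗ[k] A) d ((TensorProduct.comm k A A) (comul a))
      = ∑ i ∈ r.index, (antipode (R := k) : A →ₗ[k] A) (r.right i) ⊗ₜ[k] d (r.left i) := by
    rw [← r.eq, map_sum, map_sum]
    simp only [TensorProduct.comm_tmul, TensorProduct.map_tmul]
  rw [hRHS, Tq_apply a r s t]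
  simp only [map_sum, XiL_tmul, Om, TensorProduct.map_tmul, Om1_tmul, smap_tmul,
    counit_d d hd_counit, counit_antipode']
  refine Finset.sum_congr rfl fun i _ => ?_
  calc ∑ j ∈ (s i).index, ∑ j' ∈ (t i).index,
        (counit (R := k) ((t i).right j') • (antipode (R := k) : A →ₗ[k] A) ((t i).left j'))
          ⊗ₜ[k] (counit (R := k) ((s i).left j) • d ((s i).right j))
      = ∑ j ∈ (s i).index,
          (∑ j' ∈ (t i).index,
            counit (R := k) ((t i).right j') • (antipode (R := k) : A →ₗ[k] A) ((t i).left j'))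
          ⊗ₜ[k] (counit (R := k) ((s i).left j) • d ((s i).right j)) := by
        exact Finset.sum_congr rfl fun j _ => (sum_tmul _ _ _).symm
    _ = (∑ j' ∈ (t i).index,
            counit (R := k) ((t i).right j') • (antipode (R := k) : A →ₗ[k] A) ((t i).left j'))
          ⊗ₜ[k] (∑ j ∈ (s i).index, counit (R := k) ((s i).left j) • d ((s i).right j)) := by
        rw [← tmul_sum]
    _ = (antipode (R := k) : A →ₗ[k] A) (r.right i) ⊗ₜ[k] d (r.left i) := by
        congr 1
        · calc ∑ j' ∈ (t i).index,
                counit (R := k) ((t i).right j') • (antipode (R := k) : A →ₗ[k] A) ((t i).left j')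
              = (antipode (R := k) : A →ₗ[k] A)
                  (∑ j' ∈ (t i).index, counit (R := k) ((t i).right j') • (t i).left j') := by
                rw [map_sum]
                exact Finset.sum_congr rfl fun _ _ => (map_smul _ _ _).symm
            _ = _ := by rw [sum_eps_right (t i)]
        · calc ∑ j ∈ (s i).index, counit (R := k) ((s i).left j) • d ((s i).right j)
              = d (∑ j ∈ (s i).index, counit (R := k) ((s i).left j) • (s i).right j) := by
                rw [map_sum]
                exact Finset.sum_congr rfl fun _ _ => (map_smul _ _ _).symm
            _ = _ := by rw [sum_eps_left (s i)]

include hd_counit in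
lemma Om_XiR (a : A) :
    Om k A H (XiR k A H d (Tq k A a))
      = map (antipode (R := k) : A →ₗ[k] A) d (comul a) := by
  set r := Repr.arbitrary k a with hr
  set s : ∀ i : r.ι, Repr k (r.left i) (A × A) := fun i => Repr.arbitrary k (r.left i) with hs
  set t : ∀ i : r.ι, Repr k (r.right i) (A × A) := fun i => Repr.arbitrary k (r.right i) with ht
  have hRHS : map (antipode (R := k) : A →ₗ[k] A) d (comul a)
      = ∑ i ∈ r.index, (antipode (R := k) : A →ₗ[k] A) (r.left i) ⊗ₜ[k] d (r.right i) := by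
    rw [← r.eq, map_sum]
    simp only [TensorProduct.map_tmul]
  rw [hRHS, Tq_apply a r s t]
  simp only [map_sum, XiR_tmul, Om, TensorProduct.map_tmul, Om1_tmul, smap_tmul,
    counit_d d hd_counit, counit_antipode']
  refine Finset.sum_congr rfl fun i _ => ?_
  have swap : ∀ (α β : k) (X : A) (Y : H),
      (α • X) ⊗ₜ[k] (β • Y) = (β • X) ⊗ₜ[k] (α • Y) := by
    intro α β X Y
    rw [← smul_tmul', tmul_smul, smul_smul, mul_comm, ← smul_smul, ← tmul_smul, smul_tmul']
  calc ∑ j ∈ (s i).index, ∑ j' ∈ (t i).index,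
        (counit (R := k) ((t i).left j') • (antipode (R := k) : A →ₗ[k] A) ((s i).right j))
          ⊗ₜ[k] (counit (R := k) ((s i).left j) • d ((t i).right j'))
      = ∑ j ∈ (s i).index, ∑ j' ∈ (t i).index,
          (counit (R := k) ((s i).left j) • (antipode (R := k) : A →ₗ[k] A) ((s i).right j))
            ⊗ₜ[k] (counit (R := k) ((t i).left j') • d ((t i).right j')) := by
        exact Finset.sum_congr rfl fun j _ => Finset.sum_congr rfl fun j' _ => swap _ _ _ _
    _ = ∑ j ∈ (s i).index,
          (counit (R := k) ((s i).left j) • (antipode (R := k) : A →ₗ[k] A) ((s i).right j))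
            ⊗ₜ[k] (∑ j' ∈ (t i).index, counit (R := k) ((t i).left j') • d ((t i).right j')) := by
        exact Finset.sum_congr rfl fun j _ => (tmul_sum _ _ _).symm
    _ = (∑ j ∈ (s i).index,
          counit (R := k) ((s i).left j) • (antipode (R := k) : A →ₗ[k] A) ((s i).right j))
            ⊗ₜ[k] (∑ j' ∈ (t i).index, counit (R := k) ((t i).left j') • d ((t i).right j')) := by
        rw [← sum_tmul]
    _ = (antipode (R := k) : A →ₗ[k] A) (r.left i) ⊗ₜ[k] d (r.right i) := by
        congr 1
        · calc ∑ j ∈ (s i).index,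
                counit (R := k) ((s i).left j) • (antipode (R := k) : A →ₗ[k] A) ((s i).right j)
              = (antipode (R := k) : A →ₗ[k] A)
                  (∑ j ∈ (s i).index, counit (R := k) ((s i).left j) • (s i).right j) := by
                rw [map_sum]
                exact Finset.sum_congr rfl fun _ _ => (map_smul _ _ _).symm
            _ = _ := by rw [sum_eps_left (s i)]
        · calc ∑ j' ∈ (t i).index, counit (R := k) ((t i).left j') • d ((t i).right j')
              = d (∑ j' ∈ (t i).index, counit (R := k) ((t i).left j') • (t i).right j') := by
                rw [map_sum]
                exact Finset.sum_congr rfl fun _ _ => (map_smul _ _ _).symm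
            _ = _ := by rw [sum_eps_left (t i)]

end eps

lemma cancel_S (hbij : Function.Bijective ((antipode (R := k)) : A →ₗ[k] A))
    (h : map (antipode (R := k) : A →ₗ[k] A) d ∘ₗ (TensorProduct.comm k A A).toLinearMap ∘ₗ comul
      = map (antipode (R := k) : A →ₗ[k] A) d ∘ₗ comul) :
    map LinearMap.id d ∘ₗ (comul : A →ₗ[k] A ⊗[k] A)
      = map LinearMap.id d ∘ₗ (TensorProduct.comm k A A).toLinearMap ∘ₗ comul := by
  have inj : Function.Injective (rTensor H ((antipode (R := k)) : A →ₗ[k] A)) :=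
    Module.Flat.rTensor_preserves_injective_linearMap _ hbij.injective
  have split : (map (antipode (R := k) : A →ₗ[k] A) d : A ⊗[k] A →ₗ[k] A ⊗[k] H)
      = rTensor H ((antipode (R := k)) : A →ₗ[k] A) ∘ₗ map LinearMap.id d := by
    have h0 : (rTensor H ((antipode (R := k)) : A →ₗ[k] A) : A ⊗[k] H →ₗ[k] A ⊗[k] H)
        = map (antipode (R := k) : A →ₗ[k] A) LinearMap.id := rfl
    rw [h0, ← TensorProduct.map_comp, comp_id, id_comp]
  apply LinearMap.ext
  intro a
  apply inj
  have h1 := LinearMap.congr_fun h a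
  simp only [split, comp_apply, LinearEquiv.coe_coe] at h1 ⊢
  exact h1.symm

end Extract
end Prop27Aux


/-- Proposition 2.7(iii): assuming the antipode of `A` is bijective,
`τ∘(𝒮⊗𝒮)∘Δ = Δ∘𝒮` iff `a₁ ⊗ d(a₂) = a₂ ⊗ d(a₁)` for all `a ∈ A` and `H` is
cocommutative. -/
theorem statement12 (act : H ⊗[k] A →ₗ[k] A) (d : A →ₗ[k] H)
    (hcm : HopfCrossedModule k A H act d)
    (hbij : Function.Bijective (HopfAlgebra.antipode (R := k) : A →ₗ[k] A)) :
    (TensorProduct.comm k (A ⊗[k] H) (A ⊗[k] H)).toLinearMap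
          ∘ₗ map (SS k A H d) (SS k A H d) ∘ₗ comul1 k A H
        = comul1 k A H ∘ₗ SS k A H d
      ↔ (map LinearMap.id d ∘ₗ (Coalgebra.comul : A →ₗ[k] A ⊗[k] A)
            = map LinearMap.id d ∘ₗ (TensorProduct.comm k A A).toLinearMap
                ∘ₗ (Coalgebra.comul : A →ₗ[k] A ⊗[k] A)
          ∧ (TensorProduct.comm k H H).toLinearMap ∘ₗ (Coalgebra.comul : H →ₗ[k] H ⊗[k] H)
              = (Coalgebra.comul : H →ₗ[k] H ⊗[k] H)) := by
  classical
  open Prop27Aux Coalgebra HopfAlgebra in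
  constructor
  · intro hE
    have hpt : ∀ x : A ⊗[k] H,
        (TensorProduct.comm k (A ⊗[k] H) (A ⊗[k] H))
            (map (SS k A H d) (SS k A H d) (comul1 k A H x))
          = comul1 k A H (SS k A H d x) := by
      intro x
      have h0 := LinearMap.congr_fun hE x
      simpa only [LinearMap.comp_apply, LinearEquiv.coe_coe] using h0
    have hco : (TensorProduct.comm k H H).toLinearMap
        ∘ₗ (Coalgebra.comul : H →ₗ[k] H ⊗[k] H) = Coalgebra.comul := by
      apply LinearMap.ext
      intro h
      have h1 := hpt ((1 : A) ⊗ₜ[k] h)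
      rw [LHS_eval d 1 h, RHS_eval d hcm.d_comul 1 h, XiL_one d hcm.d_one,
        XiR_one d hcm.d_one] at h1
      have e1 := congrArg (map (smap k A H) (smap k A H)) h1
      rw [smap_extract, smap_extract] at e1
      simpa only [LinearMap.comp_apply, LinearEquiv.coe_coe] using e1
    refine ⟨?_, hco⟩
    have hcoreP : ∀ a : A, XiL k A H d (Tq k A a) = XiR k A H d (Tq k A a) := by
      intro a
      have h1 := hpt (a ⊗ₜ[k] (1 : H))
      rw [LHS_eval d a 1, RHS_eval d hcm.d_comul a 1, comul_one',
        TensorProduct.comm_tmul, Bmap_one, Bmap_one] at h1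
      exact h1
    have hsd : map (HopfAlgebra.antipode (R := k) : A →ₗ[k] A) d
          ∘ₗ (TensorProduct.comm k A A).toLinearMap ∘ₗ Coalgebra.comul
        = map (HopfAlgebra.antipode (R := k) : A →ₗ[k] A) d ∘ₗ Coalgebra.comul := by
      apply LinearMap.ext
      intro a
      have h2 := congrArg (Om k A H) (hcoreP a)
      rw [Om_XiL d hcm.d_counit a, Om_XiR d hcm.d_counit a] at h2
      simpa only [LinearMap.comp_apply, LinearEquiv.coe_coe] using h2
    exact cancel_S d hbij hsd
  · rintro ⟨h1, h2⟩
    apply TensorProduct.ext'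
    intro a h
    have e2 : (TensorProduct.comm k H H) (Coalgebra.comul h) = Coalgebra.comul h := by
      have := LinearMap.congr_fun h2 h
      simpa only [LinearMap.comp_apply, LinearEquiv.coe_coe] using this
    have e3 : XiL k A H d (Tq k A a) = XiR k A H d (Tq k A a) := by
      have := LinearMap.congr_fun (core d h1) a
      simpa only [LinearMap.comp_apply] using this
    calc ((TensorProduct.comm k (A ⊗[k] H) (A ⊗[k] H)).toLinearMap
          ∘ₗ map (SS k A H d) (SS k A H d) ∘ₗ comul1 k A H) (a ⊗ₜ[k] h)
        = (TensorProduct.comm k (A ⊗[k] H) (A ⊗[k] H))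
            (map (SS k A H d) (SS k A H d) (comul1 k A H (a ⊗ₜ[k] h))) := by
          simp only [LinearMap.comp_apply, LinearEquiv.coe_coe]
      _ = Bmap k A H (XiL k A H d (Tq k A a)
            ⊗ₜ[k] (TensorProduct.comm k H H) (Coalgebra.comul h)) := LHS_eval d a h
      _ = Bmap k A H (XiR k A H d (Tq k A a) ⊗ₜ[k] Coalgebra.comul h) := by
          rw [e2, e3]
      _ = comul1 k A H (SS k A H d (a ⊗ₜ[k] h)) := (RHS_eval d hcm.d_comul a h).symm
      _ = (comul1 k A H ∘ₗ SS k A H d) (a ⊗ₜ[k] h) := by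
          simp only [LinearMap.comp_apply]

end
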